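/- Let G be an isostatic graph and let R be any DR-plan of G. Then there exists a DR-plan R' of G in which every child of every internal node is a cluster of that node's labeling subgraph, and the size of R' is at most the size of R. Consequently, some optimal DR-plan of G has the property that every child of every internal node is a cluster of the parent. -/

import Mathlib

/-- A finite combinatorial graph: a finite vertex set and a finite set of edges,
each edge an unordered pair of distinct vertices whose endpoints lie in the vertex set. -/
structure CGraph (α : Type) [DecidableEq α] where
  verts : Finset α
  edges : Finset (Sym2 α)
  not_diag : ∀ e ∈ edges, ¬ e.IsDiag
  endpoints_mem : ∀ e ∈ edges, ∀ v ∈ e, v ∈ verts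

namespace CGraph

variable {α : Type} [DecidableEq α]

/-- Subgraph relation (componentwise containment). -/
def IsSubgraph (H G : CGraph α) : Prop :=
  H.verts ⊆ G.verts ∧ H.edges ⊆ G.edges

/-- Componentwise union of two graphs. -/
def union (G H : CGraph α) : CGraph α where
  verts := G.verts ∪ H.verts
  edges := G.edges ∪ H.edges
  not_diag := by
    intro e he
    rcases Finset.mem_union.1 he with h | h
    · exact G.not_diag e h
    · exact H.not_diag e h
  endpoints_mem := by
    intro e he v hv
    rcases Finset.mem_union.1 he with h | h
    · exact Finset.mem_union_left _ (G.endpoints_mem e h v hv)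
    · exact Finset.mem_union_right _ (H.endpoints_mem e h v hv)

/-- Componentwise intersection of two graphs. -/
def inter (G H : CGraph α) : CGraph α where
  verts := G.verts ∩ H.verts
  edges := G.edges ∩ H.edges
  not_diag := fun e he => G.not_diag e (Finset.mem_inter.1 he).1
  endpoints_mem := fun e he v hv => Finset.mem_inter.2
    ⟨G.endpoints_mem e (Finset.mem_inter.1 he).1 v hv,
     H.endpoints_mem e (Finset.mem_inter.1 he).2 v hv⟩

/-- The empty graph. -/
def empty : CGraph α := ⟨∅, ∅, by simp, by simp⟩

/-- Union of a list of graphs. -/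
def listUnion : List (CGraph α) → CGraph α
  | [] => empty
  | g :: gs => g.union (listUnion gs)

/-- A graph is trivial if it has at most one vertex. -/
def Trivial (G : CGraph α) : Prop := G.verts.card ≤ 1

/-- (2,3)-sparsity: every subgraph on at least 2 vertices has at most `2|V'| - 3` edges
(stated additively to avoid truncated subtraction). -/
def Sparse23 (G : CGraph α) : Prop :=
  ∀ H : CGraph α, H.IsSubgraph G → 2 ≤ H.verts.card →
    H.edges.card + 3 ≤ 2 * H.verts.card

/-- Isostatic (Laman-tight): (2,3)-sparse with `|E| = 2|V| - 3`. -/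
def Isostatic (G : CGraph α) : Prop :=
  G.Sparse23 ∧ G.edges.card + 3 = 2 * G.verts.card

/-- Underconstrained: (2,3)-sparse, at least two vertices, and `|E| < 2|V| - 3`. -/
def Underconstrained (G : CGraph α) : Prop :=
  G.Sparse23 ∧ 2 ≤ G.verts.card ∧ G.edges.card + 3 < 2 * G.verts.card

/-- A graph consisting of a single edge together with its two endpoints. -/
def IsSingleEdge (G : CGraph α) : Prop :=
  ∃ u v : α, u ≠ v ∧ G.verts = {u, v} ∧ G.edges = {s(u, v)}

/-- A cluster of `C`: a proper isostatic subgraph of `C` that is vertex-maximal among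
proper isostatic subgraphs of `C`. -/
def IsCluster (D C : CGraph α) : Prop :=
  D.IsSubgraph C ∧ D ≠ C ∧ D.Isostatic ∧
  ∀ D' : CGraph α, D'.IsSubgraph C → D' ≠ C → D'.Isostatic → ¬ D.verts ⊂ D'.verts

/-- Every pair of distinct clusters of `C` has trivial intersection. -/
def PairwiseTrivialClusters (C : CGraph α) : Prop :=
  ∀ D₁ D₂ : CGraph α, IsCluster D₁ C → IsCluster D₂ C → D₁ ≠ D₂ → (D₁.inter D₂).Trivial

end CGraph

/-- A finite rooted tree whose nodes are labeled by graphs. -/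
inductive DRTree (α : Type) [DecidableEq α] : Type
  | node : CGraph α → List (DRTree α) → DRTree α

namespace DRTree

variable {α : Type} [DecidableEq α]

/-- The label at the root of the tree. -/
def label : DRTree α → CGraph α
  | .node C _ => C

/-- The size of a DR-plan: the maximum fan-in (number of children) over all nodes. -/
def size : DRTree α → ℕ
  | .node _ ts => ts.attach.foldr (fun t acc => max (size t.1) acc) ts.length
decreasing_by
  have := List.sizeOf_lt_of_mem t.2
  simp only [DRTree.node.sizeOf_spec]
  omega

end DRTree

/-- `IsDRPlan t` : the labeled tree `t` is a DR-plan (of its root label): every node is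
labeled by an isostatic graph, every leaf is a single edge, and every internal node
labeled `C` has `N ≥ 2` children, all proper isostatic subgraphs of `C`, whose union
is `C`. -/
inductive IsDRPlan {α : Type} [DecidableEq α] : DRTree α → Prop
  | leaf (C : CGraph α) : C.Isostatic → C.IsSingleEdge → IsDRPlan (.node C [])
  | node (C : CGraph α) (ts : List (DRTree α)) :
      C.Isostatic →
      2 ≤ ts.length →
      (∀ t ∈ ts, (DRTree.label t).IsSubgraph C ∧ DRTree.label t ≠ C ∧
        (DRTree.label t).Isostatic) →
      CGraph.listUnion (ts.map DRTree.label) = C →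
      (∀ t ∈ ts, IsDRPlan t) →
      IsDRPlan (.node C ts)

/-- `t` is a DR-plan of the graph `G`: a DR-plan whose root is labeled `G`. -/
def IsDRPlanOf {α : Type} [DecidableEq α] (t : DRTree α) (G : CGraph α) : Prop :=
  IsDRPlan t ∧ t.label = G

/-- A DR-plan is canonical if at every internal node labeled `C`: all children are
clusters of `C`; if every pair of distinct clusters of `C` intersects trivially then
the children are exactly all the clusters of `C`; and otherwise there are exactly two
children, which are two clusters of `C` with nontrivial intersection. -/
inductive IsCanonical {α : Type} [DecidableEq α] : DRTree α → Prop
  | leaf (C : CGraph α) : IsCanonical (.node C [])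
  | node (C : CGraph α) (ts : List (DRTree α)) :
      ts ≠ [] →
      (∀ t ∈ ts, CGraph.IsCluster (DRTree.label t) C) →
      (C.PairwiseTrivialClusters →
        ∀ D : CGraph α, CGraph.IsCluster D C ↔ ∃ t ∈ ts, DRTree.label t = D) →
      (¬ C.PairwiseTrivialClusters →
        ∃ t₁ t₂ : DRTree α, ts = [t₁, t₂] ∧ DRTree.label t₁ ≠ DRTree.label t₂ ∧
          ¬ ((DRTree.label t₁).inter (DRTree.label t₂)).Trivial) →
      (∀ t ∈ ts, IsCanonical t) →
      IsCanonical (.node C ts)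

/-- In the tree, every child of every node is a cluster of that node's label. -/
inductive ClusterChildren {α : Type} [DecidableEq α] : DRTree α → Prop
  | node (C : CGraph α) (ts : List (DRTree α)) :
      (∀ t ∈ ts, CGraph.IsCluster (DRTree.label t) C) →
      (∀ t ∈ ts, ClusterChildren t) →
      ClusterChildren (.node C ts)

namespace CGraph

variable {α : Type} [DecidableEq α]

theorem ext' {G H : CGraph α} (hv : G.verts = H.verts) (he : G.edges = H.edges) : G = H := by
  cases G; cases H; simp_all

theorem IsSubgraph.refl (G : CGraph α) : G.IsSubgraph G := ⟨le_refl _, le_refl _⟩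

theorem IsSubgraph.trans {G H K : CGraph α} (h1 : G.IsSubgraph H) (h2 : H.IsSubgraph K) :
    G.IsSubgraph K := ⟨h1.1.trans h2.1, h1.2.trans h2.2⟩

theorem sparse_of_subgraph {G H : CGraph α} (hG : G.Sparse23) (h : H.IsSubgraph G) :
    H.Sparse23 := fun K hK h2 => hG K (hK.trans h) h2

theorem Isostatic.two_le_card {G : CGraph α} (hG : G.Isostatic) : 2 ≤ G.verts.card := by
  have := hG.2; omega

theorem inter_subgraph_left (G H : CGraph α) : (G.inter H).IsSubgraph G :=
  ⟨Finset.inter_subset_left, Finset.inter_subset_left⟩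

theorem inter_subgraph_right (G H : CGraph α) : (G.inter H).IsSubgraph H :=
  ⟨Finset.inter_subset_right, Finset.inter_subset_right⟩

theorem union_empty (G : CGraph α) : G.union empty = G := by
  apply ext' <;> simp [union, empty]

/-- Every vertex of an isostatic graph is incident to some edge. -/
theorem Isostatic.exists_incident {G : CGraph α} (hG : G.Isostatic) {v : α}
    (hv : v ∈ G.verts) : ∃ e ∈ G.edges, v ∈ e := by
  by_contra h
  push_neg at h
  set H : CGraph α := ⟨G.verts.erase v, G.edges, G.not_diag, by
    intro e he u hu
    exact Finset.mem_erase.2 ⟨fun huv => h e he (huv ▸ hu), G.endpoints_mem e he u hu⟩⟩ with hH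
  have hsub : H.IsSubgraph G := ⟨Finset.erase_subset _ _, le_refl _⟩
  have hc2 : 2 ≤ G.verts.card := hG.two_le_card
  rcases Nat.lt_or_ge G.verts.card 3 with h3 | h3
  · -- two vertices, one edge
    have hec : G.edges.card = 1 := by have := hG.2; omega
    obtain ⟨e, he⟩ := Finset.card_eq_one.1 hec
    have heG : e ∈ G.edges := he ▸ Finset.mem_singleton_self e
    obtain ⟨a, b⟩ := e
    have hab : a ≠ b := by
      intro hab; exact G.not_diag _ heG (Sym2.mk_isDiag_iff.2 hab)
    have ha : a ∈ G.verts := G.endpoints_mem _ heG a (Sym2.mem_mk_left a b)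
    have hb : b ∈ G.verts := G.endpoints_mem _ heG b (Sym2.mem_mk_right a b)
    have hva : v ≠ a := fun hv' => h _ heG (hv' ▸ Sym2.mem_mk_left a b)
    have hvb : v ≠ b := fun hv' => h _ heG (hv' ▸ Sym2.mem_mk_right a b)
    have : ({v, a, b} : Finset α) ⊆ G.verts := by
      intro x hx; simp at hx; rcases hx with rfl | rfl | rfl <;> assumption
    have h3' : ({v, a, b} : Finset α).card = 3 := by
      rw [Finset.card_insert_of_notMem (by simp [hva, hvb]),
        Finset.card_insert_of_notMem (by simp [hab])]
      rfl
    have := Finset.card_le_card this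
    omega
  · have hHc : H.verts.card = G.verts.card - 1 := Finset.card_erase_of_mem hv
    have := hG.1 H hsub (by omega)
    have := hG.2
    simp only [hH] at *
    omega

/-- An isostatic graph on two vertices is a single edge. -/
theorem Isostatic.single_of_card_two {G : CGraph α} (hG : G.Isostatic)
    (h2 : G.verts.card = 2) : G.IsSingleEdge := by
  have hec : G.edges.card = 1 := by have := hG.2; omega
  obtain ⟨e, he⟩ := Finset.card_eq_one.1 hec
  have heG : e ∈ G.edges := he ▸ Finset.mem_singleton_self e
  obtain ⟨a, b⟩ := e
  have hab : a ≠ b := fun hab => G.not_diag _ heG (Sym2.mk_isDiag_iff.2 hab)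
  have ha : a ∈ G.verts := G.endpoints_mem _ heG a (Sym2.mem_mk_left a b)
  have hb : b ∈ G.verts := G.endpoints_mem _ heG b (Sym2.mem_mk_right a b)
  refine ⟨a, b, hab, ?_, he⟩
  refine (Finset.eq_of_subset_of_card_le ?_ ?_).symm
  · intro x hx; simp at hx; rcases hx with rfl | rfl <;> assumption
  · rw [h2, Finset.card_insert_of_notMem (by simp [hab]), Finset.card_singleton]

/-- An isostatic subgraph of a sparse graph is induced: it contains every edge of the
ambient graph whose endpoints lie in its vertex set. -/
theorem induced_of_isostatic {C D : CGraph α} (hC : C.Sparse23) (hD : D.Isostatic)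
    (hsub : D.IsSubgraph C) {e : Sym2 α} (he : e ∈ C.edges)
    (hend : ∀ v ∈ e, v ∈ D.verts) : e ∈ D.edges := by
  classical
  set F := C.edges.filter (fun e => ∀ v ∈ e, v ∈ D.verts) with hF
  set H : CGraph α := ⟨D.verts, F, fun e' he' => C.not_diag e' (Finset.mem_filter.1 he').1,
    fun e' he' v hv => (Finset.mem_filter.1 he').2 v hv⟩ with hH
  have hsubH : H.IsSubgraph C := ⟨hsub.1, Finset.filter_subset _ _⟩
  have hcard : F.card + 3 ≤ 2 * D.verts.card := hC H hsubH hD.two_le_card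
  have hDF : D.edges ⊆ F := by
    intro e' he'
    exact Finset.mem_filter.2 ⟨hsub.2 he', fun v hv => D.endpoints_mem e' he' v hv⟩
  have : F = D.edges := (Finset.eq_of_subset_of_card_le hDF (by have := hD.2; omega)).symm
  rw [← this]
  exact Finset.mem_filter.2 ⟨he, hend⟩

/-- Monotonicity: between isostatic subgraphs of a sparse graph, vertex containment
implies subgraph containment. -/
theorem subgraph_of_verts_subset {C D₁ D₂ : CGraph α} (hC : C.Sparse23)
    (h1 : D₁.Isostatic) (h2 : D₂.Isostatic) (hs1 : D₁.IsSubgraph C) (hs2 : D₂.IsSubgraph C)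
    (hv : D₁.verts ⊆ D₂.verts) : D₁.IsSubgraph D₂ := by
  refine ⟨hv, fun e he => ?_⟩
  exact induced_of_isostatic hC h2 hs2 (hs1.2 he) (fun v hve => hv (D₁.endpoints_mem e he v hve))

/-- A proper isostatic subgraph of an isostatic graph has strictly fewer vertices. -/
theorem card_lt_of_proper {C D : CGraph α} (hC : C.Isostatic) (hD : D.Isostatic)
    (hsub : D.IsSubgraph C) (hne : D ≠ C) : D.verts.card < C.verts.card := by
  rcases Nat.lt_or_ge D.verts.card C.verts.card with h | h
  · exact h
  · exfalso
    have hv : D.verts = C.verts := Finset.eq_of_subset_of_card_le hsub.1 h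
    have he : D.edges = C.edges := by
      apply Finset.eq_of_subset_of_card_le hsub.2
      have := hC.2; have := hD.2; rw [hv] at *; omega
    exact hne (ext' hv he)

/-- Two isostatic subgraphs of a sparse graph sharing at least two vertices have
isostatic intersection. -/
theorem inter_isostatic {C D₁ D₂ : CGraph α} (hC : C.Sparse23)
    (h1 : D₁.Isostatic) (h2 : D₂.Isostatic) (hs1 : D₁.IsSubgraph C) (hs2 : D₂.IsSubgraph C)
    (hcc : 2 ≤ (D₁.verts ∩ D₂.verts).card) : (D₁.inter D₂).Isostatic := by
  have hsubI : (D₁.inter D₂).IsSubgraph C := (inter_subgraph_left D₁ D₂).trans hs1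
  have hsubU : (D₁.union D₂).IsSubgraph C := ⟨Finset.union_subset hs1.1 hs2.1,
    Finset.union_subset hs1.2 hs2.2⟩
  have hUc : 2 ≤ (D₁.verts ∪ D₂.verts).card :=
    le_trans h1.two_le_card (Finset.card_le_card Finset.subset_union_left)
  have hup : (D₁.inter D₂).edges.card + 3 ≤ 2 * (D₁.verts ∩ D₂.verts).card :=
    hC _ hsubI hcc
  have hlow : (D₁.union D₂).edges.card + 3 ≤ 2 * (D₁.verts ∪ D₂.verts).card :=
    hC _ hsubU hUc
  have hev : (D₁.edges ∪ D₂.edges).card + (D₁.edges ∩ D₂.edges).card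
      = D₁.edges.card + D₂.edges.card := Finset.card_union_add_card_inter _ _
  have hvv : (D₁.verts ∪ D₂.verts).card + (D₁.verts ∩ D₂.verts).card
      = D₁.verts.card + D₂.verts.card := Finset.card_union_add_card_inter _ _
  have h1' := h1.2
  have h2' := h2.2
  refine ⟨sparse_of_subgraph hC hsubI, ?_⟩
  simp only [inter] at *
  simp only [union] at hlow
  omega

/-- Every proper isostatic subgraph is contained in a cluster. -/
theorem exists_cluster {C K : CGraph α} (hC : C.Isostatic) (hK : K.Isostatic)
    (hsub : K.IsSubgraph C) (hne : K ≠ C) : ∃ D, IsCluster D C ∧ K.IsSubgraph D := by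
  obtain ⟨m, hm⟩ : ∃ m, C.verts.card ≤ K.verts.card + m := ⟨C.verts.card, by omega⟩
  induction m generalizing K with
  | zero => exact absurd (card_lt_of_proper hC hK hsub hne) (by omega)
  | succ m ih =>
    by_cases hcl : IsCluster K C
    · exact ⟨K, hcl, IsSubgraph.refl K⟩
    · simp only [IsCluster, not_and] at hcl
      obtain ⟨D', hD's, hD'ne, hD'iso, hss⟩ := by
        push_neg at hcl
        exact hcl hsub hne hK
      have hKD' : K.IsSubgraph D' :=
        subgraph_of_verts_subset hC.1 hK hD'iso hsub hD's hss.1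
      have hlt : K.verts.card < D'.verts.card := Finset.card_lt_card hss
      obtain ⟨D, hD, hD'D⟩ := ih hD'iso hD's hD'ne (by omega)
      exact ⟨D, hD, hKD'.trans hD'D⟩

theorem mem_listUnion_verts {l : List (CGraph α)} {v : α} :
    v ∈ (listUnion l).verts ↔ ∃ g ∈ l, v ∈ g.verts := by
  induction l with
  | nil => simp [listUnion, empty]
  | cons g gs ih => simp [listUnion, union, ih, Finset.mem_union]

theorem mem_listUnion_edges {l : List (CGraph α)} {e : Sym2 α} :
    e ∈ (listUnion l).edges ↔ ∃ g ∈ l, e ∈ g.edges := by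
  induction l with
  | nil => simp [listUnion, empty]
  | cons g gs ih => simp [listUnion, union, ih, Finset.mem_union]

/-- If every member of a list of graphs is a subgraph of `D`, and jointly they cover
the vertices and edges of `D`, then their union is `D`. -/
theorem listUnion_eq_of_cover {l : List (CGraph α)} {D : CGraph α}
    (hsub : ∀ g ∈ l, g.IsSubgraph D)
    (hv : ∀ v ∈ D.verts, ∃ g ∈ l, v ∈ g.verts)
    (he : ∀ e ∈ D.edges, ∃ g ∈ l, e ∈ g.edges) : listUnion l = D := by
  apply ext'
  · apply Finset.Subset.antisymm
    · intro v hvl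
      obtain ⟨g, hg, hvg⟩ := mem_listUnion_verts.1 hvl
      exact (hsub g hg).1 hvg
    · intro v hvD
      obtain ⟨g, hg, hvg⟩ := hv v hvD
      exact mem_listUnion_verts.2 ⟨g, hg, hvg⟩
  · apply Finset.Subset.antisymm
    · intro e hel
      obtain ⟨g, hg, heg⟩ := mem_listUnion_edges.1 hel
      exact (hsub g hg).2 heg
    · intro e heD
      obtain ⟨g, hg, heg⟩ := he e heD
      exact mem_listUnion_edges.2 ⟨g, hg, heg⟩

end CGraph

namespace DRTree

variable {α : Type} [DecidableEq α]

theorem foldr_max_init (f : β → ℕ) (b : ℕ) (l : List β) :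
    b ≤ l.foldr (fun x acc => max (f x) acc) b := by
  induction l with
  | nil => exact le_refl b
  | cons x xs ih => exact le_trans ih (le_max_right _ _)

theorem foldr_max_mem (f : β → ℕ) (b : ℕ) (l : List β) {x : β} (hx : x ∈ l) :
    f x ≤ l.foldr (fun x acc => max (f x) acc) b := by
  induction l with
  | nil => simp at hx
  | cons y ys ih =>
    rcases List.mem_cons.1 hx with rfl | hx'
    · exact le_max_left _ _
    · exact le_trans (ih hx') (le_max_right _ _)

theorem foldr_max_le (f : β → ℕ) (b : ℕ) (l : List β) {m : ℕ} (hb : b ≤ m)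
    (h : ∀ x ∈ l, f x ≤ m) : l.foldr (fun x acc => max (f x) acc) b ≤ m := by
  induction l with
  | nil => exact hb
  | cons y ys ih =>
    exact max_le (h y (List.mem_cons_self)) (ih fun x hx => h x (List.mem_cons_of_mem y hx))

theorem length_le_size (C : CGraph α) (ts : List (DRTree α)) :
    ts.length ≤ (node C ts).size := by
  rw [size]; exact foldr_max_init _ _ _

theorem size_child_le (C : CGraph α) (ts : List (DRTree α)) {t : DRTree α} (ht : t ∈ ts) :
    t.size ≤ (node C ts).size := by
  rw [size]
  exact foldr_max_mem (fun s => size s.1) ts.length ts.attach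
    (x := ⟨t, ht⟩) (List.mem_attach ts ⟨t, ht⟩)

theorem size_le (C : CGraph α) (ts : List (DRTree α)) {m : ℕ} (hlen : ts.length ≤ m)
    (h : ∀ t ∈ ts, t.size ≤ m) : (node C ts).size ≤ m := by
  rw [size]
  exact foldr_max_le _ _ _ hlen fun x _ => h x.1 x.2

end DRTree

theorem list_choice {β γ : Type*} {P : β → γ → Prop} :
    ∀ l : List β, (∀ x ∈ l, ∃ y, P x y) → ∃ l' : List γ, List.Forall₂ P l l'
  | [], _ => ⟨[], List.Forall₂.nil⟩
  | x :: xs, h => by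
    obtain ⟨y, hy⟩ := h x (List.mem_cons_self)
    obtain ⟨l', hl'⟩ := list_choice xs fun z hz => h z (List.mem_cons_of_mem x hz)
    exact ⟨y :: l', List.Forall₂.cons hy hl'⟩

theorem forall₂_mem_right {β γ : Type*} {P : β → γ → Prop} {l : List β} {l' : List γ}
    (h : List.Forall₂ P l l') : ∀ y ∈ l', ∃ x ∈ l, P x y := by
  induction h with
  | nil => simp
  | cons hxy _ ih =>
    intro y hy
    rcases List.mem_cons.1 hy with rfl | hy'
    · exact ⟨_, List.mem_cons_self, hxy⟩
    · obtain ⟨x, hx, hP⟩ := ih y hy'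
      exact ⟨x, List.mem_cons_of_mem _ hx, hP⟩

theorem forall₂_mem_left {β γ : Type*} {P : β → γ → Prop} {l : List β} {l' : List γ}
    (h : List.Forall₂ P l l') : ∀ x ∈ l, ∃ y ∈ l', P x y := by
  induction h with
  | nil => simp
  | cons hxy _ ih =>
    intro x hx
    rcases List.mem_cons.1 hx with rfl | hx'
    · exact ⟨_, List.mem_cons_self, hxy⟩
    · obtain ⟨y, hy, hP⟩ := ih x hx'
      exact ⟨y, List.mem_cons_of_mem _ hy, hP⟩

open CGraph DRTree in
/-- Restriction: from a DR-plan of `C` one obtains a DR-plan of any isostatic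
subgraph `D` of `C`, of no larger size. -/
theorem restrict_plan {α : Type} [DecidableEq α] {t : DRTree α} (ht : IsDRPlan t) :
    ∀ D : CGraph α, D.Isostatic → D.IsSubgraph t.label →
    ∃ s : DRTree α, IsDRPlan s ∧ s.label = D ∧ s.size ≤ t.size := by
  induction ht with
  | leaf C hiso hse =>
    intro D hDiso hDsub
    simp only [DRTree.label] at hDsub
    obtain ⟨u, v, huv, hV, hE⟩ := id hse
    have hCc : C.verts.card = 2 := by
      rw [hV, Finset.card_insert_of_notMem (by simp [huv]), Finset.card_singleton]
    have hvs : D.verts = C.verts :=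
      Finset.eq_of_subset_of_card_le hDsub.1 (by rw [hCc]; exact hDiso.two_le_card)
    have hes : D.edges = C.edges := by
      apply Finset.eq_of_subset_of_card_le hDsub.2
      have := hiso.2; have := hDiso.2; rw [hvs] at *; omega
    have : D = C := CGraph.ext' hvs hes
    subst this
    exact ⟨.node D [], .leaf D hiso hse, rfl, le_refl _⟩
  | node C ts hiso hlen hch hun hts ih =>
    intro D hDiso hDsub
    simp only [DRTree.label] at hDsub
    by_cases hcase : ∃ t' ∈ ts, D.IsSubgraph t'.label
    · obtain ⟨t', ht', hsub'⟩ := hcase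
      obtain ⟨s, h1, h2, h3⟩ := ih t' ht' D hDiso hsub'
      exact ⟨s, h1, h2, h3.trans (size_child_le C ts ht')⟩
    by_cases h2c : D.verts.card ≤ 2
    · have hcard : D.verts.card = 2 := le_antisymm h2c hDiso.two_le_card
      refine ⟨.node D [], .leaf D hDiso (hDiso.single_of_card_two hcard), rfl, ?_⟩
      have h0 : (DRTree.node D ([] : List (DRTree α))).size = 0 := by
        rw [DRTree.size]; rfl
      omega
    have h3c : 3 ≤ D.verts.card := by omega
    classical
    set good := ts.filter (fun t' => 2 ≤ (D.verts ∩ t'.label.verts).card) with hgood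
    have hCsp := hiso.1
    have key : ∀ t' ∈ good, ∃ s : DRTree α, IsDRPlan s ∧ s.label = D.inter t'.label ∧
        s.label.Isostatic ∧ s.size ≤ t'.size := by
      intro t' ht'
      have htm : t' ∈ ts := List.mem_of_mem_filter ht'
      have hcc : 2 ≤ (D.verts ∩ t'.label.verts).card := by
        have := List.of_mem_filter ht'
        simpa using this
      have hlab := hch t' htm
      have hint : (D.inter t'.label).Isostatic :=
        CGraph.inter_isostatic hCsp hDiso hlab.2.2 hDsub hlab.1 hcc
      obtain ⟨s, h1, h2, h3⟩ := ih t' htm _ hint (CGraph.inter_subgraph_right _ _)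
      exact ⟨s, h1, h2, h2 ▸ hint, h3⟩
    obtain ⟨ss, hss⟩ := list_choice good key
    -- children properties
    have hchild : ∀ s ∈ ss, s.label.IsSubgraph D ∧ s.label ≠ D ∧ s.label.Isostatic := by
      intro s hs
      obtain ⟨t', ht', hP⟩ := forall₂_mem_right hss s hs
      refine ⟨hP.2.1 ▸ CGraph.inter_subgraph_left _ _, ?_, hP.2.2.1⟩
      rw [hP.2.1]
      intro heq
      apply hcase
      refine ⟨t', List.mem_of_mem_filter ht', ?_, ?_⟩
      · have := congrArg CGraph.verts heq
        simp only [CGraph.inter] at this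
        exact Finset.inter_eq_left.1 this
      · have := congrArg CGraph.edges heq
        simp only [CGraph.inter] at this
        exact Finset.inter_eq_left.1 this
    -- union property
    have hcover_e : ∀ e ∈ D.edges, ∃ t' ∈ good, e ∈ (D.inter t'.label).edges ∧
        ∀ v ∈ e, v ∈ (D.inter t'.label).verts := by
      intro e he
      have heC : e ∈ C.edges := hDsub.2 he
      have : e ∈ (CGraph.listUnion (ts.map DRTree.label)).edges := by rw [hun]; exact heC
      obtain ⟨g, hg, heg⟩ := CGraph.mem_listUnion_edges.1 this
      obtain ⟨t', ht', rfl⟩ := List.mem_map.1 hg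
      obtain ⟨v, w⟩ := e
      have hvw : v ≠ w := fun h => D.not_diag _ he (Sym2.mk_isDiag_iff.2 h)
      have hvD : v ∈ D.verts := D.endpoints_mem _ he v (Sym2.mem_mk_left v w)
      have hwD : w ∈ D.verts := D.endpoints_mem _ he w (Sym2.mem_mk_right v w)
      have hvT : v ∈ t'.label.verts := t'.label.endpoints_mem _ heg v (Sym2.mem_mk_left v w)
      have hwT : w ∈ t'.label.verts := t'.label.endpoints_mem _ heg w (Sym2.mem_mk_right v w)
      have hcc : 2 ≤ (D.verts ∩ t'.label.verts).card := by
        refine Finset.one_lt_card.2 ⟨v, ?_, w, ?_, hvw⟩ <;>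
          simp [Finset.mem_inter, hvD, hwD, hvT, hwT]
      refine ⟨t', ?_, ?_, ?_⟩
      · rw [hgood]
        exact List.mem_filter.2 ⟨ht', by simpa using hcc⟩
      · exact Finset.mem_inter.2 ⟨he, heg⟩
      · intro u hu
        rcases Sym2.mem_iff.1 hu with rfl | rfl <;>
          exact Finset.mem_inter.2 (by constructor <;> assumption)
    have hunion : CGraph.listUnion (ss.map DRTree.label) = D := by
      apply CGraph.listUnion_eq_of_cover
      · intro g hg
        obtain ⟨s, hs, rfl⟩ := List.mem_map.1 hg
        exact (hchild s hs).1
      · intro v hv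
        obtain ⟨e, he, hve⟩ := hDiso.exists_incident hv
        obtain ⟨t', ht', _, hve'⟩ := hcover_e e he
        obtain ⟨s, hs, hP⟩ := forall₂_mem_left hss t' ht'
        exact ⟨s.label, List.mem_map.2 ⟨s, hs, rfl⟩, hP.2.1 ▸ hve' v hve⟩
      · intro e he
        obtain ⟨t', ht', he', _⟩ := hcover_e e he
        obtain ⟨s, hs, hP⟩ := forall₂_mem_left hss t' ht'
        exact ⟨s.label, List.mem_map.2 ⟨s, hs, rfl⟩, hP.2.1 ▸ he'⟩
    -- length at least two
    have hlen2 : 2 ≤ ss.length := by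
      match ss, hss, hchild, hunion with
      | [], _, _, hunion =>
        exfalso
        have : D.verts = ∅ := by
          have := congrArg CGraph.verts hunion
          simp only [List.map_nil, CGraph.listUnion, CGraph.empty] at this
          exact this.symm
        rw [Finset.card_eq_zero.2 this] at h3c
        omega
      | [s], _, hchild, hunion =>
        exfalso
        have : s.label = D := by
          rw [← hunion]
          simp only [List.map_cons, List.map_nil, CGraph.listUnion]
          exact (CGraph.union_empty _).symm
        exact (hchild s (List.mem_singleton_self s)).2.1 this
      | s1 :: s2 :: rest, _, _, _ => simp only [List.length_cons]; omega
    -- the plan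
    refine ⟨.node D ss, ?_, rfl, ?_⟩
    · refine IsDRPlan.node D ss hDiso hlen2 hchild hunion ?_
      intro s hs
      obtain ⟨t', ht', hP⟩ := forall₂_mem_right hss s hs
      exact hP.1
    · apply size_le
      · calc ss.length = good.length := (List.Forall₂.length_eq hss).symm
          _ ≤ ts.length := List.length_filter_le _ _
          _ ≤ (DRTree.node C ts).size := length_le_size C ts
      · intro s hs
        obtain ⟨t', ht', hP⟩ := forall₂_mem_right hss s hs
        exact hP.2.2.2.trans (size_child_le C ts (List.mem_of_mem_filter ht'))

open CGraph DRTree in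
/-- Transformation: any DR-plan can be turned into one of the same label, no larger
size, in which every child of every node is a cluster of the node's label. -/
theorem transform_plan {α : Type} [DecidableEq α] :
    ∀ (n : ℕ) (t : DRTree α), t.label.verts.card ≤ n → IsDRPlan t →
    ∃ s : DRTree α, IsDRPlan s ∧ s.label = t.label ∧ ClusterChildren s ∧ s.size ≤ t.size := by
  intro n
  induction n with
  | zero =>
    intro t hcard ht
    exfalso
    have : t.label.Isostatic := by
      cases ht with
      | leaf C hiso _ => exact hiso
      | node C ts hiso _ _ _ _ => exact hiso
    have := this.two_le_card
    omega
  | succ n ih =>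
    intro t hcard ht
    cases ht with
    | leaf C hiso hse =>
      exact ⟨.node C [], .leaf C hiso hse, rfl,
        ClusterChildren.node C [] (by simp) (by simp), le_refl _⟩
    | node C ts hiso hlen hch hun hts =>
      have htplan : IsDRPlan (.node C ts) := .node C ts hiso hlen hch hun hts
      simp only [DRTree.label] at hcard ⊢
      have key : ∀ t' ∈ ts, ∃ s : DRTree α, IsDRPlan s ∧ IsCluster s.label C ∧
          t'.label.IsSubgraph s.label ∧ ClusterChildren s ∧
          s.size ≤ (DRTree.node C ts).size := by
        intro t' ht'
        obtain ⟨hsub', hne', hiso'⟩ := hch t' ht'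
        obtain ⟨E, hEcl, hsubE⟩ := CGraph.exists_cluster hiso hiso' hsub' hne'
        obtain ⟨p, hp1, hp2, hp3⟩ := restrict_plan htplan E hEcl.2.2.1 hEcl.1
        have hEcard : E.verts.card < C.verts.card :=
          CGraph.card_lt_of_proper hiso hEcl.2.2.1 hEcl.1 hEcl.2.1
        obtain ⟨s, hs1, hs2, hs3, hs4⟩ := ih p (by rw [hp2]; omega) hp1
        exact ⟨s, hs1, (hs2.trans hp2) ▸ hEcl, (hs2.trans hp2) ▸ hsubE, hs3,
          hs4.trans hp3⟩
      obtain ⟨ss, hss⟩ := list_choice ts key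
      have hunion : CGraph.listUnion (ss.map DRTree.label) = C := by
        apply CGraph.listUnion_eq_of_cover
        · intro g hg
          obtain ⟨s, hs, rfl⟩ := List.mem_map.1 hg
          obtain ⟨t', ht', hP⟩ := forall₂_mem_right hss s hs
          exact hP.2.1.1
        · intro v hv
          have : v ∈ (CGraph.listUnion (ts.map DRTree.label)).verts := by rw [hun]; exact hv
          obtain ⟨g, hg, hvg⟩ := CGraph.mem_listUnion_verts.1 this
          obtain ⟨t', ht', rfl⟩ := List.mem_map.1 hg
          obtain ⟨s, hs, hP⟩ := forall₂_mem_left hss t' ht'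
          exact ⟨s.label, List.mem_map.2 ⟨s, hs, rfl⟩, hP.2.2.1.1 hvg⟩
        · intro e he
          have : e ∈ (CGraph.listUnion (ts.map DRTree.label)).edges := by rw [hun]; exact he
          obtain ⟨g, hg, heg⟩ := CGraph.mem_listUnion_edges.1 this
          obtain ⟨t', ht', rfl⟩ := List.mem_map.1 hg
          obtain ⟨s, hs, hP⟩ := forall₂_mem_left hss t' ht'
          exact ⟨s.label, List.mem_map.2 ⟨s, hs, rfl⟩, hP.2.2.1.2 heg⟩
      have hlen' : ss.length = ts.length := (List.Forall₂.length_eq hss).symm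
      refine ⟨.node C ss, ?_, rfl, ?_, ?_⟩
      · refine IsDRPlan.node C ss hiso (by omega) ?_ hunion ?_
        · intro s hs
          obtain ⟨t', ht', hP⟩ := forall₂_mem_right hss s hs
          exact ⟨hP.2.1.1, hP.2.1.2.1, hP.2.1.2.2.1⟩
        · intro s hs
          obtain ⟨t', ht', hP⟩ := forall₂_mem_right hss s hs
          exact hP.1
      · refine ClusterChildren.node C ss ?_ ?_
        · intro s hs
          obtain ⟨t', ht', hP⟩ := forall₂_mem_right hss s hs
          exact hP.2.1
        · intro s hs
          obtain ⟨t', ht', hP⟩ := forall₂_mem_right hss s hs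
          exact hP.2.2.2.1
      · apply size_le
        · rw [hlen']; exact length_le_size C ts
        · intro s hs
          obtain ⟨t', ht', hP⟩ := forall₂_mem_right hss s hs
          exact hP.2.2.2.2

/-- from any DR-plan `R` of an isostatic graph `G` one can obtain a
DR-plan `R'` of `G` of size at most that of `R` in which every child of every internal
node is a cluster of that node's label; consequently some optimal DR-plan of `G` has
this property. -/
theorem drplan_to_cluster_children
    {α : Type} [DecidableEq α] (G : CGraph α) (hG : G.Isostatic)
    (R : DRTree α) (hR : IsDRPlanOf R G) :
    (∃ R' : DRTree α, IsDRPlanOf R' G ∧ ClusterChildren R' ∧ R'.size ≤ R.size) ∧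
    (∃ R'' : DRTree α, IsDRPlanOf R'' G ∧ ClusterChildren R'' ∧
      ∀ R''' : DRTree α, IsDRPlanOf R''' G → R''.size ≤ R'''.size) := by
  classical
  have transform : ∀ t : DRTree α, IsDRPlanOf t G →
      ∃ s : DRTree α, IsDRPlanOf s G ∧ ClusterChildren s ∧ s.size ≤ t.size := by
    intro t ⟨ht, hlab⟩
    obtain ⟨s, hs1, hs2, hs3, hs4⟩ := transform_plan t.label.verts.card t (le_refl _) ht
    exact ⟨s, ⟨hs1, hs2.trans hlab⟩, hs3, hs4⟩
  constructor
  · exact transform R hR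
  · have hex : ∃ k : ℕ, ∃ R' : DRTree α, IsDRPlanOf R' G ∧ R'.size = k :=
      ⟨R.size, R, hR, rfl⟩
    obtain ⟨R₀, hR₀, hR₀k⟩ := Nat.find_spec hex
    obtain ⟨s, hs1, hs2, hs3⟩ := transform R₀ hR₀
    refine ⟨s, hs1, hs2, ?_⟩
    intro R''' hR'''
    have : Nat.find hex ≤ R'''.size := Nat.find_le ⟨R''', hR''', rfl⟩
    omega
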